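/- Let n be a natural number and let ρ, σ be density matrices of size n×n over ℂ (positive semidefinite with trace 1). Then Tr(√(√ρ · σ · √ρ)) equals the sum, over the multiset of roots z of the characteristic polynomial of ρ·σ counted with multiplicity, of Real.sqrt (Re z) (coerced to ℂ). Consequently the quantum fidelity satisfies F(ρ,σ) = Tr(√(√ρ σ √ρ))² = (Σᵢ √λᵢ(ρσ))², where λᵢ(ρσ) are the eigenvalues of ρσ. -/

import Mathlib

open scoped ComplexOrder

namespace Matrix.PosSemidef
variable {n : Type*} [Fintype n] [DecidableEq n] {𝕜 : Type*} [RCLike 𝕜] {A : Matrix n n 𝕜}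
noncomputable def sqrt (hA : A.PosSemidef) : Matrix n n 𝕜 :=
  hA.1.eigenvectorUnitary.1 * Matrix.diagonal ((↑) ∘ (√·) ∘ hA.1.eigenvalues) *
    (star hA.1.eigenvectorUnitary : Matrix n n 𝕜)
lemma posSemidef_sqrt (hA : A.PosSemidef) : PosSemidef hA.sqrt := by
  apply PosSemidef.mul_mul_conjTranspose_same
  refine posSemidef_diagonal_iff.mpr fun i ↦ ?_
  rw [Function.comp_apply, RCLike.nonneg_iff]
  constructor
  · simp only [RCLike.ofReal_re]
    exact Real.sqrt_nonneg _
  · simp only [RCLike.ofReal_im]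
lemma sqrt_mul_self (hA : A.PosSemidef) : hA.sqrt * hA.sqrt = A := by
  have hU : (star hA.1.eigenvectorUnitary : Matrix n n 𝕜) * hA.1.eigenvectorUnitary.1 = 1 :=
    (Matrix.mem_unitaryGroup_iff').mp hA.1.eigenvectorUnitary.2
  conv_rhs => rw [hA.1.spectral_theorem, Unitary.conjStarAlgAut_apply]
  simp only [sqrt]
  rw [show ∀ a b c d e f : Matrix n n 𝕜, a * b * c * (d * e * f) = a * (b * (c * d) * e) * f by
      intro a b c d e f; simp only [Matrix.mul_assoc], hU, Matrix.mul_one,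
    Matrix.diagonal_mul_diagonal]
  congr 3
  funext i
  simp only [Function.comp_apply]
  rw [← RCLike.ofReal_mul, Real.mul_self_sqrt (hA.eigenvalues_nonneg i)]
end Matrix.PosSemidef

/-- `√ρ * σ * √ρ` is positive semidefinite whenever `ρ` and `σ` are. -/
noncomputable def sandwichPosSemidef {n : ℕ} {ρ σ : Matrix (Fin n) (Fin n) ℂ}
    (hρ : ρ.PosSemidef) (hσ : σ.PosSemidef) :
    (hρ.sqrt * σ * hρ.sqrt).PosSemidef := by
  have h := hσ.conjTranspose_mul_mul_same hρ.sqrt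
  rwa [hρ.posSemidef_sqrt.isHermitian.eq] at h

/-- Quantum fidelity `F(ρ,σ) = Tr(√(√ρ σ √ρ))²`. -/
noncomputable def fidelity {n : ℕ} {ρ σ : Matrix (Fin n) (Fin n) ℂ}
    (hρ : ρ.PosSemidef) (hσ : σ.PosSemidef) : ℂ :=
  (sandwichPosSemidef hρ hσ).sqrt.trace ^ 2

open Polynomial Matrix

variable {n : ℕ}

lemma my_eval_charpoly (M : Matrix (Fin n) (Fin n) ℂ) (r : ℂ) :
    M.charpoly.eval r = (Matrix.scalar (Fin n) r - M).det := by
  rw [Matrix.charpoly, eval_det, Matrix.matPolyEquiv_charmatrix]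
  simp

lemma my_charpoly_mul_comm (A B : Matrix (Fin n) (Fin n) ℂ) :
    (A * B).charpoly = (B * A).charpoly := by
  apply Polynomial.funext
  intro r
  rw [my_eval_charpoly, my_eval_charpoly]
  rcases eq_or_ne r 0 with h | h
  · subst h
    rw [map_zero, zero_sub, zero_sub, show -(A*B) = (-A) * B by rw [Matrix.neg_mul],
      show -(B*A) = B * (-A) by rw [Matrix.mul_neg], Matrix.det_mul_comm]
  · have e1 : Matrix.scalar (Fin n) r - A * B = r • (1 - (r⁻¹ • A) * B) := by
      rw [smul_sub, Matrix.smul_mul, smul_smul, mul_inv_cancel₀ h, one_smul,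
        smul_eq_diagonal_mul]
      simp [Matrix.scalar]
    have e2 : Matrix.scalar (Fin n) r - B * A = r • (1 - B * (r⁻¹ • A)) := by
      rw [smul_sub, Matrix.mul_smul, smul_smul, mul_inv_cancel₀ h, one_smul,
        smul_eq_diagonal_mul]
      simp [Matrix.scalar]
    rw [e1, e2, Matrix.det_smul, Matrix.det_smul, Matrix.det_one_sub_mul_comm]

lemma my_charpoly_hermitian {S : Matrix (Fin n) (Fin n) ℂ} (hS : S.IsHermitian) :
    S.charpoly = ∏ i, (X - C ((hS.eigenvalues i : ℂ))) := by
  apply Polynomial.funext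
  intro r
  set U : Matrix (Fin n) (Fin n) ℂ := (hS.eigenvectorUnitary : Matrix (Fin n) (Fin n) ℂ)
  set D : Matrix (Fin n) (Fin n) ℂ := Matrix.diagonal (RCLike.ofReal ∘ hS.eigenvalues)
  have hU : U * star U = 1 := (Matrix.mem_unitaryGroup_iff).mp hS.eigenvectorUnitary.2
  have hS' : S = U * D * star U := hS.spectral_theorem
  have key : Matrix.scalar (Fin n) r - S = U * (Matrix.scalar (Fin n) r - D) * star U := by
    rw [Matrix.mul_sub, Matrix.sub_mul, hS']
    congr 1
    rw [Matrix.scalar_apply, ← Matrix.smul_one_eq_diagonal, Matrix.mul_smul,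
      Matrix.smul_mul, mul_one, hU]
  rw [my_eval_charpoly, key, Matrix.det_mul, Matrix.det_mul, mul_comm (Matrix.det U),
    mul_assoc, ← Matrix.det_mul, hU, Matrix.det_one, mul_one]
  rw [show Matrix.scalar (Fin n) r - D =
    Matrix.diagonal (fun i => r - (hS.eigenvalues i : ℂ)) by
      rw [Matrix.scalar_apply, Matrix.diagonal_sub]; rfl,
    Matrix.det_diagonal, eval_prod]
  simp

lemma my_trace_sqrt {S : Matrix (Fin n) (Fin n) ℂ} (hS : S.PosSemidef) :
    hS.sqrt.trace = ∑ i, (Real.sqrt (hS.1.eigenvalues i) : ℂ) := by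
  rw [show hS.sqrt = hS.1.eigenvectorUnitary.1 *
      Matrix.diagonal ((↑) ∘ Real.sqrt ∘ hS.1.eigenvalues) *
      (star hS.1.eigenvectorUnitary : Matrix (Fin n) (Fin n) ℂ) from rfl,
    Matrix.trace_mul_cycle]
  have hU : (star hS.1.eigenvectorUnitary : Matrix (Fin n) (Fin n) ℂ) *
      hS.1.eigenvectorUnitary.1 = 1 :=
    (Matrix.mem_unitaryGroup_iff').mp hS.1.eigenvectorUnitary.2
  rw [hU, one_mul, Matrix.trace_diagonal]
  rfl

/-- For density matrices `ρ`, `σ`, the trace of `√(√ρ σ √ρ)` equals the sum of the square roots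
of the eigenvalues of `ρσ` (roots of its characteristic polynomial, with multiplicity);
consequently `F(ρ,σ) = (Σᵢ √λᵢ(ρσ))²`. -/
theorem trace_sqrt_sandwich_eq_sum_sqrt_eigenvalues (n : ℕ) (ρ σ : Matrix (Fin n) (Fin n) ℂ)
    (hρ : ρ.PosSemidef) (hσ : σ.PosSemidef) (hρ1 : ρ.trace = 1) (hσ1 : σ.trace = 1) :
    (sandwichPosSemidef hρ hσ).sqrt.trace =
      (((ρ * σ).charpoly.roots).map (fun z => (Real.sqrt z.re : ℂ))).sum ∧
    fidelity hρ hσ =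
      (((ρ * σ).charpoly.roots).map (fun z => (Real.sqrt z.re : ℂ))).sum ^ 2 := by
  have hcp : (ρ * σ).charpoly = (hρ.sqrt * σ * hρ.sqrt).charpoly := by
    conv_lhs => rw [← hρ.sqrt_mul_self, mul_assoc]
    rw [my_charpoly_mul_comm]
  have hroots : (ρ * σ).charpoly.roots =
      (Finset.univ.val.map (fun i => ((sandwichPosSemidef hρ hσ).1.eigenvalues i : ℂ))) := by
    rw [hcp, my_charpoly_hermitian (sandwichPosSemidef hρ hσ).1,
      show (∏ i, (X - C (((sandwichPosSemidef hρ hσ).1.eigenvalues i : ℂ)))) =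
        ((Finset.univ.val.map (fun i => (((sandwichPosSemidef hρ hσ).1.eigenvalues i : ℂ)))).map
          (fun z => X - C z)).prod by rw [Multiset.map_map]; rfl]
    exact Polynomial.roots_multiset_prod_X_sub_C _
  have hsum : (((ρ * σ).charpoly.roots).map (fun z => (Real.sqrt z.re : ℂ))).sum =
      (sandwichPosSemidef hρ hσ).sqrt.trace := by
    rw [hroots, Multiset.map_map, my_trace_sqrt,
      show (∑ i, (Real.sqrt ((sandwichPosSemidef hρ hσ).1.eigenvalues i) : ℂ)) =
        (Finset.univ.val.map
          (fun i => (Real.sqrt ((sandwichPosSemidef hρ hσ).1.eigenvalues i) : ℂ))).sum from rfl]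
    exact congrArg Multiset.sum (Multiset.map_congr rfl (fun i _ => by simp))
  exact ⟨hsum.symm, by rw [fidelity, hsum]⟩
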